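/- If H is a finite-index subgroup of a group G, then the subspace topology on H induced from the profinite topology on G equals the profinite topology on H. -/
import Mathlib


/-- The profinite topology on a group `G`: the weakest topology making the projection
to every finite (discrete) quotient continuous; equivalently, generated by cosets of
finite-index subgroups. -/
def profiniteTopology (G : Type) [Group G] : TopologicalSpace G :=
  ⨅ (K : Subgroup G) (_ : K.Normal) (_ : K.FiniteIndex),
    TopologicalSpace.induced (fun g : G => (QuotientGroup.mk g : G ⧸ K)) ⊥

/-- If the fibers of `g` refine the fibers of `f`, the discrete-induced topology of `g`
is finer than that of `f`. -/
lemma induced_bot_le_induced_bot {X A B : Type*} [Nonempty A] (f : X → A) (g : X → B)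
    (h : ∀ x y, g x = g y → f x = f y) :
    TopologicalSpace.induced g ⊥ ≤ TopologicalSpace.induced f ⊥ := by
  classical
  set φ : B → A := fun b => if hb : ∃ x, g x = b then f hb.choose else Classical.arbitrary A
  have hf : f = φ ∘ g := by
    funext x
    have hx : ∃ y, g y = g x := ⟨x, rfl⟩
    simp only [φ, Function.comp_apply, dif_pos hx]
    exact (h _ _ hx.choose_spec).symm
  rw [hf, ← induced_compose]
  exact induced_mono bot_le

theorem finiteIndex_induced_profiniteTopology (G : Type) [Group G] (H : Subgroup G)
    (hfi : H.FiniteIndex) :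
    TopologicalSpace.induced (Subtype.val : H → G) (profiniteTopology G) =
      profiniteTopology H := by
  haveI := hfi
  unfold profiniteTopology
  simp only [induced_iInf]
  apply le_antisymm
  · -- LHS ≤ profinite H : for each N normal finite index in H find K in G
    refine le_iInf fun N => le_iInf fun hN => le_iInf fun hNfi => ?_
    haveI := hNfi
    set N' : Subgroup G := N.map H.subtype with hN'
    have hN'le : N' ≤ H := by
      rintro x ⟨y, _, rfl⟩; exact y.2
    have hN'fi : N'.FiniteIndex := by
      constructor
      have h1 : N'.relIndex H * H.index = N'.index := Subgroup.relIndex_mul_index hN'le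
      have h2 : N'.subgroupOf H = N := by
        rw [hN', Subgroup.subgroupOf, Subgroup.comap_map_eq_self_of_injective H.subtype_injective]
      have : N'.relIndex H = N.index := by rw [Subgroup.relIndex, h2]
      rw [← h1, this]
      exact mul_ne_zero hNfi.index_ne_zero hfi.index_ne_zero
    haveI := hN'fi
    set K : Subgroup G := N'.normalCore with hK
    haveI : K.FiniteIndex := Subgroup.finiteIndex_normalCore N'
    refine le_trans (iInf_le _ K) ?_
    refine le_trans (iInf_le _ (Subgroup.normalCore_normal N')) ?_
    refine le_trans (iInf_le _ ‹K.FiniteIndex›) ?_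
    rw [induced_compose]
    refine induced_bot_le_induced_bot _ _ fun x y hxy => ?_
    have hx : ((x : G)⁻¹ * y : G) ∈ K := QuotientGroup.eq.mp hxy
    have : (x⁻¹ * y : H) ∈ N := by
      have h1 : ((x⁻¹ * y : H) : G) ∈ N' := Subgroup.normalCore_le N' hx
      obtain ⟨z, hz, hz2⟩ := h1
      have : z = x⁻¹ * y := Subtype.ext hz2
      rwa [← this]
    exact QuotientGroup.eq.mpr this
  · -- profinite H ≤ LHS : for each K normal finite index in G take N = K.subgroupOf H
    refine le_iInf fun K => le_iInf fun hK => le_iInf fun hKfi => ?_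
    haveI := hKfi
    set N : Subgroup H := K.subgroupOf H with hN
    haveI : N.Normal := Subgroup.Normal.comap hK _
    haveI : N.FiniteIndex := Subgroup.instFiniteIndex_subgroupOf K H
    refine le_trans (iInf_le _ N) ?_
    refine le_trans (iInf_le _ ‹N.Normal›) ?_
    refine le_trans (iInf_le _ ‹N.FiniteIndex›) ?_
    rw [induced_compose]
    refine induced_bot_le_induced_bot _ _ fun x y hxy => ?_
    have : (x⁻¹ * y : H) ∈ N := QuotientGroup.eq.mp hxy
    exact QuotientGroup.eq.mpr this
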